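/- arXiv:1504.00559 — 2 statements merged into one kernel-verified Lean document; each statement's English description precedes it below -/
import Mathlib

section
/- There exists a constant C, depending only on M and β, such that every function h : [0,1] → ℝ that is nondecreasing, right-continuous with left limits, and satisfies h(1/n) ≥ −Mn and h(1 − 1/n) ≤ Mn for every natural number n ≥ 1, obeys the uniform bound ∫₀¹ h(u)² κ(u) du ≤ C. -/
open MeasureTheory Set Filter

noncomputable section

/-- The density `κ(u) = u^β` for `u ∈ [0,1/2]` and `κ(u) = (1-u)^β` for `u ∈ (1/2,1]`. -/
def kappa (β : ℝ) (u : ℝ) : ℝ := if u ≤ 1/2 then u ^ β else (1 - u) ^ β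

/-- `h` is nondecreasing and right-continuous with left limits on `[0,1]`. -/
def IsCadlagNondecreasing (h : ℝ → ℝ) : Prop :=
  MonotoneOn h (Set.Icc 0 1) ∧
  (∀ x ∈ Set.Ico (0:ℝ) 1, Tendsto h (nhdsWithin x (Set.Ioc x 1)) (nhds (h x))) ∧
  (∀ x ∈ Set.Ioc (0:ℝ) 1, ∃ l : ℝ, Tendsto h (nhdsWithin x (Set.Ico 0 x)) (nhds l))

lemma key_bound (β : ℝ) (hβ : 1 < β) (M : ℝ) (hM : 0 < M) (h : ℝ → ℝ)
    (hmono : MonotoneOn h (Set.Icc 0 1))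
    (hbd : ∀ n : ℕ, 1 ≤ n → -(M * n) ≤ h (1 / n) ∧ h (1 - 1 / n) ≤ M * n)
    (u : ℝ) (hu : u ∈ Set.Ioo (0:ℝ) 1) :
    (h u) ^ 2 * kappa β u ≤ 4 * M ^ 2 * (u ^ (β - 2) + (1 - u) ^ (β - 2)) := by
  obtain ⟨hu0, hu1⟩ := hu
  have huI : u ∈ Set.Icc (0:ℝ) 1 := ⟨hu0.le, hu1.le⟩
  have hhalfI : (1/2 : ℝ) ∈ Set.Icc (0:ℝ) 1 := by norm_num
  have h2 := hbd 2 (by norm_num)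
  have h2' : h (1/2) ≤ 2 * M ∧ -(2*M) ≤ h (1/2) := by
    have e1 : (1 : ℝ) - 1 / (2:ℕ) = 1/2 := by norm_num
    have e2 : (1 : ℝ) / (2:ℕ) = 1/2 := by norm_num
    constructor
    · have := h2.2; rw [e1] at this; linarith [this]
    · have := h2.1; rw [e2] at this; push_cast at this ⊢; linarith
  by_cases hc : u ≤ 1/2
  · -- left case
    have hk : kappa β u = u ^ β := if_pos hc
    -- upper bound
    have hub : h u ≤ 2 * M / u := by
      have : h u ≤ h (1/2) := hmono huI hhalfI hc
      have h2Mu : 2 * M ≤ 2 * M / u := by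
        rw [le_div_iff₀ hu0]; nlinarith
      linarith [h2'.1]
    -- lower bound
    set n := ⌈1/u⌉₊ with hn
    have h1u : (1:ℝ) ≤ 1/u := by rw [le_div_iff₀ hu0]; linarith
    have hn1 : 1 ≤ n := by
      rw [hn, Nat.one_le_ceil_iff]; positivity
    have hnu : 1/u ≤ (n:ℝ) := Nat.le_ceil _
    have hnup : (n:ℝ) ≤ 2/u := by
      have := Nat.ceil_lt_add_one (by positivity : (0:ℝ) ≤ 1/u)
      have : (n:ℝ) < 1/u + 1 := this
      have h2u : 1/u + 1 ≤ 2/u := by rw [div_add' _ _ _ hu0.ne', div_le_div_iff₀ hu0 hu0]; nlinarith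
      linarith
    have hninv : 1/(n:ℝ) ≤ u := by
      rw [div_le_iff₀ (by positivity : (0:ℝ) < (n:ℝ))]
      rw [div_le_iff₀ hu0] at hnu; linarith
    have hnI : (1/(n:ℝ)) ∈ Set.Icc (0:ℝ) 1 := ⟨by positivity, le_trans hninv hu1.le⟩
    have hlb : -(2 * M / u) ≤ h u := by
      have hm : h (1/(n:ℝ)) ≤ h u := hmono hnI huI hninv
      have := (hbd n hn1).1
      have hMn : M * n ≤ 2 * M / u := by
        rw [le_div_iff₀ hu0]
        calc M * n * u ≤ M * (2/u) * u := by
              apply mul_le_mul_of_nonneg_right _ hu0.le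
              exact mul_le_mul_of_nonneg_left hnup hM.le
          _ = 2 * M := by field_simp
      linarith
    have hsq : (h u)^2 ≤ (2*M/u)^2 := sq_le_sq' hlb hub
    have hkb : (h u)^2 * u ^ β ≤ (2*M/u)^2 * u ^ β :=
      mul_le_mul_of_nonneg_right hsq (Real.rpow_nonneg hu0.le β)
    have heq : (2*M/u)^2 * u ^ β = 4 * M^2 * u ^ (β - 2) := by
      rw [Real.rpow_sub hu0, show (2:ℝ) = ((2:ℕ):ℝ) by norm_num, Real.rpow_natCast]
      field_simp
      ring
    have hv0 : 0 < 1 - u := by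
      by_contra hcon
      push_neg at hcon
      linarith
    have hpos : 0 ≤ 4 * M^2 * (1-u) ^ (β - 2) := by positivity
    rw [hk]
    rw [heq] at hkb
    linarith [hkb, hpos]
  · -- right case
    push_neg at hc
    have hv0 : 0 < 1 - u := by linarith
    have hk : kappa β u = (1-u) ^ β := if_neg (by linarith)
    have hlb : -(2 * M / (1-u)) ≤ h u := by
      have : h (1/2) ≤ h u := hmono hhalfI huI hc.le
      have h2Mu : 2 * M ≤ 2 * M / (1-u) := by
        rw [le_div_iff₀ hv0]; nlinarith
      linarith [h2'.2]
    set n := ⌈1/(1-u)⌉₊ with hn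
    have h1u : (1:ℝ) ≤ 1/(1-u) := by rw [le_div_iff₀ hv0]; linarith
    have hn1 : 1 ≤ n := by rw [hn, Nat.one_le_ceil_iff]; positivity
    have hnu : 1/(1-u) ≤ (n:ℝ) := Nat.le_ceil _
    have hnup : (n:ℝ) ≤ 2/(1-u) := by
      have h1 : (n:ℝ) < 1/(1-u) + 1 := Nat.ceil_lt_add_one (by positivity)
      have h2u : 1/(1-u) + 1 ≤ 2/(1-u) := by rw [div_add' _ _ _ hv0.ne', div_le_div_iff₀ hv0 hv0]; nlinarith
      linarith
    have hninv : u ≤ 1 - 1/(n:ℝ) := by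
      have hnpos : (0:ℝ) < n := by exact_mod_cast hn1
      have : 1/(n:ℝ) ≤ 1 - u := by
        rw [div_le_iff₀ hnpos]
        rw [div_le_iff₀ hv0] at hnu; linarith
      linarith
    have hnI : (1 - 1/(n:ℝ)) ∈ Set.Icc (0:ℝ) 1 := by
      have hnpos : (0:ℝ) < n := by exact_mod_cast hn1
      constructor
      · have : 1/(n:ℝ) ≤ 1 := by rw [div_le_iff₀ hnpos]; simpa using (show (1:ℝ) ≤ n by exact_mod_cast hn1)
        linarith
      · have : 0 ≤ 1/(n:ℝ) := by positivity
        linarith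
    have hub : h u ≤ 2 * M / (1-u) := by
      have hm : h u ≤ h (1 - 1/(n:ℝ)) := hmono huI hnI hninv
      have := (hbd n hn1).2
      have hMn : M * n ≤ 2 * M / (1-u) := by
        rw [le_div_iff₀ hv0]
        calc M * n * (1-u) ≤ M * (2/(1-u)) * (1-u) := by
              apply mul_le_mul_of_nonneg_right _ hv0.le
              exact mul_le_mul_of_nonneg_left hnup hM.le
          _ = 2 * M := by field_simp
      linarith
    have hsq : (h u)^2 ≤ (2*M/(1-u))^2 := sq_le_sq' hlb hub
    have hkb : (h u)^2 * (1-u) ^ β ≤ (2*M/(1-u))^2 * (1-u) ^ β :=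
      mul_le_mul_of_nonneg_right hsq (Real.rpow_nonneg hv0.le β)
    have heq : (2*M/(1-u))^2 * (1-u) ^ β = 4 * M^2 * (1-u) ^ (β - 2) := by
      rw [Real.rpow_sub hv0, show (2:ℝ) = ((2:ℕ):ℝ) by norm_num, Real.rpow_natCast]
      field_simp
      ring
    have hpos : 0 ≤ 4 * M^2 * u ^ (β - 2) := by positivity
    rw [hk]
    rw [heq] at hkb
    linarith [hkb, hpos]


/-- There is a constant `C`, depending only on `M` and `β`, such that every
nondecreasing càdlàg `h : [0,1] → ℝ` with `h(1/n) ≥ -Mn` and `h(1 - 1/n) ≤ Mn` for all `n ≥ 1`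
satisfies `∫₀¹ h(u)² κ(u) du ≤ C`. -/
theorem uniform_L2mu_bound (β : ℝ) (hβ : 1 < β) (M : ℝ) (hM : 0 < M) :
    ∃ C : ℝ, ∀ h : ℝ → ℝ, IsCadlagNondecreasing h →
      (∀ n : ℕ, 1 ≤ n → -(M * n) ≤ h (1 / n) ∧ h (1 - 1 / n) ≤ M * n) →
      ∫⁻ u in Set.Icc (0:ℝ) 1, ENNReal.ofReal ((h u) ^ 2 * kappa β u)
        ≤ ENNReal.ofReal C := by
  have hr1 : -1 < β - 2 := by linarith
  set g : ℝ → ℝ := fun u => 4*M^2 * (u ^ (β-2) + (1-u) ^ (β-2)) with hg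
  have hi1 : IntervalIntegrable (fun u : ℝ => u ^ (β-2)) volume 0 1 :=
    intervalIntegral.intervalIntegrable_rpow' hr1
  have hi2 : IntervalIntegrable (fun u : ℝ => (1-u) ^ (β-2)) volume 0 1 := by
    have := (intervalIntegral.intervalIntegrable_rpow' (a:=0) (b:=1) hr1).comp_sub_left 1
    simpa using this.symm
  have hInt : IntegrableOn g (Set.Icc 0 1) := by
    have h3 := (hi1.add hi2).const_mul (4*M^2)
    rw [intervalIntegrable_iff_integrableOn_Icc_of_le (by norm_num : (0:ℝ) ≤ 1)] at h3
    exact h3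
  have hfin : ∫⁻ u in Set.Icc (0:ℝ) 1, ENNReal.ofReal (g u) < ⊤ := by
    have h0 : 0 ≤ᵐ[volume.restrict (Set.Icc (0:ℝ) 1)] g := by
      filter_upwards [ae_restrict_mem measurableSet_Icc] with u hu
      have hu1 : (0:ℝ) ≤ 1 - u := by linarith [hu.2]
      have hu0 : (0:ℝ) ≤ u := hu.1
      simp only [hg]
      positivity
    exact (hasFiniteIntegral_iff_ofReal h0).mp hInt.hasFiniteIntegral
  refine ⟨(∫⁻ u in Set.Icc (0:ℝ) 1, ENNReal.ofReal (g u)).toReal, ?_⟩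
  intro h hcad hbd
  rw [ENNReal.ofReal_toReal hfin.ne]
  refine lintegral_mono_ae ?_
  have hae : ∀ᵐ u ∂(volume.restrict (Set.Icc (0:ℝ) 1)), u ∈ Set.Ioo (0:ℝ) 1 := by
    have h1 : ∀ᵐ u : ℝ ∂volume, u ≠ 0 := by
      rw [ae_iff]; simpa using measure_singleton (0:ℝ)
    have h2 : ∀ᵐ u : ℝ ∂volume, u ≠ 1 := by
      rw [ae_iff]; simpa using measure_singleton (1:ℝ)
    filter_upwards [ae_restrict_mem measurableSet_Icc, ae_restrict_of_ae h1,
      ae_restrict_of_ae h2] with u hu hu0 hu1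
    exact ⟨lt_of_le_of_ne hu.1 (Ne.symm hu0), lt_of_le_of_ne hu.2 hu1⟩
  filter_upwards [hae] with u hu
  exact ENNReal.ofReal_le_ofReal (key_bound β hβ M hM h hcad.1 hbd u hu)

end
end

section
/- Let φ ∈ C([0,T], L2(μ)) with φ(0) = id (the identity function u ↦ u on [0,1]) and let k ∈ L2([0,T], L2(λ)). Suppose that for every h ∈ H one has ⟨h(T), φ(T)⟩_{L2(λ)} − ⟨h(0), id⟩_{L2(λ)} − ∫₀ᵀ ⟨ḣ(s), φ(s)⟩_{L2(λ)} ds = ∫₀ᵀ ⟨h(s), k(s)⟩_{L2(λ)} ds. Then φ takes values in L2(λ), is continuous and absolutely continuous as an L2(λ)-valued function, and its derivative equals k; that is, φ(t) = id + ∫₀ᵗ k(s) ds in L2(λ) for every t ∈ [0,T]. -/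
open MeasureTheory Set Filter
open scoped ENNReal NNReal

noncomputable section

/-- Lebesgue measure restricted to `[0,1]`. -/
def lambda01 : Measure ℝ := volume.restrict (Set.Icc (0:ℝ) 1)

/-- The measure `μ(du) = κ(u) du` on `[0,1]`. -/
def muMeas (β : ℝ) : Measure ℝ :=
  lambda01.withDensity (fun u => ENNReal.ofReal (kappa β u))

/-- The measure `μ⁻¹(du) = κ(u)⁻¹ du` on `[0,1]`. -/
def muInv (β : ℝ) : Measure ℝ :=
  lambda01.withDensity (fun u => ENNReal.ofReal ((kappa β u)⁻¹))

section base
variable {β u : ℝ}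

lemma measurable_kappa : Measurable (kappa β) := by
  unfold kappa
  exact Measurable.ite (measurableSet_Iic (a := (1:ℝ)/2))
    (measurable_id.pow_const β) ((measurable_const.sub measurable_id).pow_const β)

lemma kappa_nonneg (hu : u ∈ Icc (0:ℝ) 1) : 0 ≤ kappa β u := by
  unfold kappa
  split_ifs with h
  · exact Real.rpow_nonneg hu.1 β
  · exact Real.rpow_nonneg (by linarith [hu.2]) β

lemma kappa_le_one (hβ : 0 ≤ β) (hu : u ∈ Icc (0:ℝ) 1) : kappa β u ≤ 1 := by
  unfold kappa
  split_ifs with h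
  · exact Real.rpow_le_one hu.1 hu.2 hβ
  · exact Real.rpow_le_one (by linarith [hu.2]) (by linarith [hu.1]) hβ

lemma kappa_band_lb {δ : ℝ} (hδ : 0 < δ) (hβ : 0 ≤ β) (hu : u ∈ Icc δ (1-δ)) :
    δ ^ β ≤ kappa β u := by
  unfold kappa
  split_ifs with h
  · exact Real.rpow_le_rpow hδ.le hu.1 hβ
  · exact Real.rpow_le_rpow hδ.le (by linarith [hu.2]) hβ

lemma kappa_band_pos {δ : ℝ} (hδ : 0 < δ) (hβ : 0 ≤ β) (hu : u ∈ Icc δ (1-δ)) :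
    0 < kappa β u :=
  lt_of_lt_of_le (Real.rpow_pos_of_pos hδ β) (kappa_band_lb hδ hβ hu)

lemma kappa_pos_Ioo (hu : u ∈ Ioo (0:ℝ) 1) : 0 < kappa β u := by
  unfold kappa
  split_ifs with h
  · exact Real.rpow_pos_of_pos hu.1 β
  · exact Real.rpow_pos_of_pos (by linarith [hu.2]) β

lemma ae_mem_Icc : ∀ᵐ u ∂lambda01, u ∈ Icc (0:ℝ) 1 :=
  ae_restrict_mem measurableSet_Icc

lemma ae_mem_Ioo : ∀ᵐ u ∂lambda01, u ∈ Ioo (0:ℝ) 1 := by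
  have h2 : lambda01 {x : ℝ | ¬ x ∈ Ioo (0:ℝ) 1} = 0 := by
    have hsub : {x : ℝ | ¬ x ∈ Ioo (0:ℝ) 1} ∩ Icc (0:ℝ) 1 ⊆ ({0, 1} : Set ℝ) := by
      rintro x ⟨h1, h2, h3⟩
      simp only [mem_Ioo, not_and_or, not_lt] at h1
      rcases h1 with h | h
      · left; linarith
      · right; exact le_antisymm h3 h

    rw [lambda01, Measure.restrict_apply' measurableSet_Icc]
    refine measure_mono_null hsub ?_
    exact ((Set.finite_singleton (1:ℝ)).insert 0).measure_zero _
  exact h2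
end base

section meas
variable {β : ℝ}

instance : IsFiniteMeasure lambda01 := by
  constructor
  rw [lambda01, Measure.restrict_apply_univ, Real.volume_Icc]
  norm_num

lemma isFiniteMeasure_muMeas (hβ : 0 ≤ β) : IsFiniteMeasure (muMeas β) := by
  constructor
  rw [muMeas, withDensity_apply _ MeasurableSet.univ, Measure.restrict_univ]
  calc ∫⁻ u, ENNReal.ofReal (kappa β u) ∂lambda01
      ≤ ∫⁻ _, 1 ∂lambda01 := by
        refine lintegral_mono_ae (ae_mem_Icc.mono fun u hu => ?_)
        simpa using ENNReal.ofReal_le_one.2 (kappa_le_one hβ hu)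
    _ < ⊤ := by simpa using (measure_lt_top lambda01 univ)

lemma lambda01_eq_muMeas_withDensity :
    lambda01 = (muMeas β).withDensity (fun u => ENNReal.ofReal ((kappa β u)⁻¹)) := by
  rw [muMeas, ← withDensity_mul _ (g := fun u => ENNReal.ofReal ((kappa β u)⁻¹)) (measurable_kappa.ennreal_ofReal)
    (measurable_kappa.inv.ennreal_ofReal)]
  rw [show ((fun u => ENNReal.ofReal (kappa β u)) * fun u => ENNReal.ofReal ((kappa β u)⁻¹))
      = fun u => ENNReal.ofReal (kappa β u) * ENNReal.ofReal ((kappa β u)⁻¹) from rfl]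
  have : (fun u => ENNReal.ofReal (kappa β u) * ENNReal.ofReal ((kappa β u)⁻¹))
      =ᵐ[lambda01] (fun _ => 1) := by
    refine ae_mem_Ioo.mono fun u hu => ?_
    have hpos : 0 < kappa β u := kappa_pos_Ioo hu
    show ENNReal.ofReal (kappa β u) * ENNReal.ofReal ((kappa β u)⁻¹) = 1
    rw [← ENNReal.ofReal_mul hpos.le, mul_inv_cancel₀ hpos.ne', ENNReal.ofReal_one]
  rw [withDensity_congr_ae this, show (fun _ : ℝ => (1:ℝ≥0∞)) = 1 from rfl, withDensity_one]

lemma lambda01_eq_muInv_withDensity :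
    lambda01 = (muInv β).withDensity (fun u => ENNReal.ofReal (kappa β u)) := by
  rw [muInv, ← withDensity_mul _ (f := fun u => ENNReal.ofReal ((kappa β u)⁻¹)) (measurable_kappa.inv.ennreal_ofReal)
    (measurable_kappa.ennreal_ofReal)]
  rw [show ((fun u => ENNReal.ofReal ((kappa β u)⁻¹)) * fun u => ENNReal.ofReal (kappa β u))
      = fun u => ENNReal.ofReal ((kappa β u)⁻¹) * ENNReal.ofReal (kappa β u) from rfl]
  have : (fun u => ENNReal.ofReal ((kappa β u)⁻¹) * ENNReal.ofReal (kappa β u))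
      =ᵐ[lambda01] (fun _ => 1) := by
    refine ae_mem_Ioo.mono fun u hu => ?_
    have hpos : 0 < kappa β u := kappa_pos_Ioo hu
    show ENNReal.ofReal ((kappa β u)⁻¹) * ENNReal.ofReal (kappa β u) = 1
    rw [← ENNReal.ofReal_mul (by positivity), inv_mul_cancel₀ hpos.ne', ENNReal.ofReal_one]
  rw [withDensity_congr_ae this, show (fun _ : ℝ => (1:ℝ≥0∞)) = 1 from rfl, withDensity_one]

lemma lambda01_ac_muMeas : lambda01 ≪ muMeas β := by
  nth_rewrite 1 [lambda01_eq_muMeas_withDensity (β := β)]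
  exact withDensity_absolutelyContinuous _ _

lemma lambda01_ac_muInv : lambda01 ≪ muInv β := by
  nth_rewrite 1 [lambda01_eq_muInv_withDensity (β := β)]
  exact withDensity_absolutelyContinuous _ _

lemma muMeas_ac_lambda01 : muMeas β ≪ lambda01 := withDensity_absolutelyContinuous _ _
lemma muInv_ac_lambda01 : muInv β ≪ lambda01 := withDensity_absolutelyContinuous _ _

lemma muInv_band_lt_top {δ : ℝ} (hδ : 0 < δ) (hβ : 0 ≤ β) {S : Set ℝ}
    (hS : MeasurableSet S) (hSb : S ⊆ Icc δ (1-δ)) : muInv β S < ⊤ := by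
  rw [muInv, withDensity_apply _ hS]
  calc ∫⁻ u in S, ENNReal.ofReal ((kappa β u)⁻¹) ∂lambda01
      ≤ ∫⁻ _ in S, ENNReal.ofReal ((δ ^ β)⁻¹) ∂lambda01 := by
        refine setLIntegral_mono' hS fun u hu => ?_
        refine ENNReal.ofReal_le_ofReal ?_
        exact inv_anti₀ (Real.rpow_pos_of_pos hδ β) (kappa_band_lb hδ hβ (hSb hu))
    _ < ⊤ := by
        rw [lintegral_const]
        exact ENNReal.mul_lt_top ENNReal.ofReal_lt_top (measure_lt_top _ _)

end meas

lemma lintegral_muMeas_restrict {β : ℝ} {s : Set ℝ} (hs : MeasurableSet s) (g : ℝ → ℝ≥0∞) :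
    ∫⁻ u in s, g u ∂(muMeas β) = ∫⁻ u in s, ENNReal.ofReal (kappa β u) * g u ∂lambda01 := by
  rw [muMeas, restrict_withDensity hs,
    lintegral_withDensity_eq_lintegral_mul_non_measurable _
      measurable_kappa.ennreal_ofReal
      (Filter.Eventually.of_forall fun u => ENNReal.ofReal_lt_top) g]
  rfl

section band
variable {β δ : ℝ} {S : Set ℝ}

/-- Weighted integral identity: integrating against the `L²(μ)` weight
`1_S κ⁻¹` w.r.t. `μ` is integration over `S` w.r.t. `λ`. -/
lemma integral_band_weight (hβ : 0 ≤ β) (hδ : 0 < δ) (hS : MeasurableSet S)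
    (hSb : S ⊆ Icc δ (1-δ)) (v : ℝ → ℝ) :
    ∫ u, S.indicator (fun u => (kappa β u)⁻¹) u * v u ∂(muMeas β)
      = ∫ u in S, v u ∂lambda01 := by
  rw [muMeas, show (fun u => ENNReal.ofReal (kappa β u))
      = (fun u => ((Real.toNNReal (kappa β u) : ℝ≥0) : ℝ≥0∞)) from rfl,
    integral_withDensity_eq_integral_smul measurable_kappa.real_toNNReal _,
    ← integral_indicator hS]
  refine integral_congr_ae (ae_mem_Icc.mono fun u hu => ?_)
  show (kappa β u).toNNReal • (S.indicator (fun u => (kappa β u)⁻¹) u * v u) = S.indicator v u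
  rw [NNReal.smul_def, Real.coe_toNNReal _ (kappa_nonneg hu)]
  by_cases h : u ∈ S
  · rw [Set.indicator_of_mem h, Set.indicator_of_mem h, smul_eq_mul, ← mul_assoc,
      mul_inv_cancel₀ (kappa_band_pos hδ hβ (hSb h)).ne', one_mul]
  · simp [Set.indicator_of_notMem h]

lemma memℒp_wfun (hβ : 0 ≤ β) (hδ : 0 < δ) (hS : MeasurableSet S)
    (hSb : S ⊆ Icc δ (1-δ)) :
    MemLp (S.indicator fun u => (kappa β u)⁻¹) 2 (muMeas β) := by
  haveI := isFiniteMeasure_muMeas hβ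
  refine MemLp.of_bound ((measurable_kappa.inv.indicator hS).aestronglyMeasurable)
    ((δ ^ β)⁻¹) (Filter.Eventually.of_forall fun u => ?_)
  by_cases h : u ∈ S
  · rw [Set.indicator_of_mem h, Real.norm_eq_abs,
      abs_of_nonneg (inv_nonneg.2 (kappa_band_pos hδ hβ (hSb h)).le)]
    exact inv_anti₀ (Real.rpow_pos_of_pos hδ β) (kappa_band_lb hδ hβ (hSb h))
  · rw [Set.indicator_of_notMem h]
    simp only [norm_zero]
    positivity

/-- Pairing against the `L²(μ⁻¹)` indicator element is integration over `S`. -/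
lemma integral_coe_indicatorLp_mul (hS : MeasurableSet S) (hfin : muInv β S ≠ ⊤)
    (v : ℝ → ℝ) :
    ∫ u, ((indicatorConstLp 2 hS hfin (1:ℝ) : Lp ℝ 2 (muInv β)) : ℝ → ℝ) u * v u ∂lambda01
      = ∫ u in S, v u ∂lambda01 := by
  have hcoe : ((indicatorConstLp 2 hS hfin (1:ℝ) : Lp ℝ 2 (muInv β)) : ℝ → ℝ)
      =ᵐ[lambda01] S.indicator (fun _ => (1:ℝ)) :=
    (indicatorConstLp_coeFn).filter_mono (lambda01_ac_muInv (β := β)).ae_le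
  rw [integral_congr_ae (μ := lambda01)
      (g := fun u => S.indicator (fun _ => (1:ℝ)) u * v u)
      (hcoe.mono fun u hu => by rw [hu]), ← integral_indicator hS]
  congr 1
  ext u
  by_cases h : u ∈ S <;> simp [h]

end band


/-- Membership in `H`: `h ∈ C([0,T], L²(μ⁻¹))` is absolutely continuous with derivative
`hdot ∈ L²([0,T], L²(μ⁻¹))`. -/
def MemH (T β : ℝ) (h hdot : ℝ → Lp ℝ 2 (muInv β)) : Prop :=
  ContinuousOn h (Set.Icc 0 T) ∧
  IntegrableOn hdot (Set.Icc 0 T) volume ∧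
  (∀ t ∈ Set.Icc (0:ℝ) T, h t = h 0 + ∫ s in (0:ℝ)..t, hdot s) ∧
  (∫⁻ s in Set.Icc (0:ℝ) T, ((‖hdot s‖₊ : ℝ≥0∞) ^ 2)) < ⊤

section tests
variable {T β : ℝ}

instance isFiniteMeasure_restrict_Icc (a b : ℝ) :
    IsFiniteMeasure (volume.restrict (Icc a b)) := by
  constructor
  rw [Measure.restrict_apply_univ, Real.volume_Icc]
  exact ENNReal.ofReal_lt_top

/-- The constant test function. -/
lemma memH_const (hT : 0 < T) (g : Lp ℝ 2 (muInv β)) :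
    MemH T β (fun _ => g) (fun _ => 0) := by
  refine ⟨continuousOn_const, (integrable_zero _ _ _), fun t ht => by simp, by simp⟩

/-- The ramp test function `s ↦ min s t • g`. -/
lemma memH_ramp (hT : 0 < T) (g : Lp ℝ 2 (muInv β)) {t : ℝ} (ht : t ∈ Icc 0 T) :
    MemH T β (fun s => min s t • g)
      (fun s => Set.indicator {x : ℝ | x ≤ t} (fun _ => (1:ℝ)) s • g) := by
  refine ⟨((continuous_id.min continuous_const).smul continuous_const).continuousOn,
    (((integrable_const (1:ℝ)).indicator (measurableSet_Iic (a := t))).smul_const g),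
    fun s' hs' => ?_, ?_⟩
  · rw [intervalIntegral.integral_smul_const]
    have hmin0 : min (0:ℝ) t = 0 := min_eq_left ht.1
    have hint : (∫ r in (0:ℝ)..s', Set.indicator {x : ℝ | x ≤ t} (fun _ => (1:ℝ)) r)
        = min s' t := by
      rcases le_total s' t with h | h
      · rw [min_eq_left h]
        have heq : Set.EqOn (Set.indicator {x : ℝ | x ≤ t} (fun _ => (1:ℝ)))
            (fun _ => (1:ℝ)) (Set.uIcc 0 s') := by
          intro r hr
          have hr' : r ∈ Icc 0 s' := by rwa [uIcc_of_le hs'.1] at hr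
          simp [Set.indicator_apply, le_trans hr'.2 h]
        rw [intervalIntegral.integral_congr heq]
        simp
      · rw [min_eq_right h,
          intervalIntegral.integral_indicator (f := fun _ => (1:ℝ)) ⟨ht.1, h⟩]
        simp
    rw [hint]
    show (min s' t) • g = (min 0 t) • g + (min s' t) • g
    rw [hmin0, zero_smul, zero_add]
  · refine lt_of_le_of_lt (lintegral_mono fun s => ?_)
      (show (∫⁻ _ in Icc (0:ℝ) T, ((‖g‖₊ : ℝ≥0∞) ^ 2)) < ⊤ from ?_)
    · have hb : ‖Set.indicator {x : ℝ | x ≤ t} (fun _ => (1:ℝ)) s • g‖₊ ≤ ‖g‖₊ := by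
        rw [nnnorm_smul]
        by_cases h : s ≤ t <;> simp [Set.indicator_apply, h]
      exact pow_le_pow_left₀ zero_le (ENNReal.coe_le_coe.2 hb) 2
    · rw [lintegral_const]
      exact ENNReal.mul_lt_top (ENNReal.pow_lt_top ENNReal.coe_lt_top)
        (measure_lt_top _ _)
end tests

section key
variable {T β δ : ℝ} {S : Set ℝ}

lemma key_identity
    (hT : 0 < T) (hβ : 0 ≤ β) (hδ : 0 < δ)
    (hS : MeasurableSet S) (hSb : S ⊆ Icc δ (1-δ))
    (φ : ℝ → Lp ℝ 2 (muMeas β)) (hφcont : ContinuousOn φ (Set.Icc 0 T))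
    (hφ0 : (φ 0 : ℝ → ℝ) =ᵐ[muMeas β] fun u => u)
    (k : ℝ → Lp ℝ 2 lambda01)
    (hkmeas : AEStronglyMeasurable k (volume.restrict (Set.Icc (0:ℝ) T)))
    (hkL2 : (∫⁻ s in Set.Icc (0:ℝ) T, ((‖k s‖₊ : ℝ≥0∞) ^ 2)) < ⊤)
    (hpairing : ∀ h hdot : ℝ → Lp ℝ 2 (muInv β), MemH T β h hdot →
      (∫ u, (h T : ℝ → ℝ) u * (φ T : ℝ → ℝ) u ∂lambda01)
        - (∫ u, (h 0 : ℝ → ℝ) u * u ∂lambda01)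
        - (∫ s in Set.Icc (0:ℝ) T,
            (∫ u, (hdot s : ℝ → ℝ) u * (φ s : ℝ → ℝ) u ∂lambda01))
      = ∫ s in Set.Icc (0:ℝ) T,
          (∫ u, (h s : ℝ → ℝ) u * (k s : ℝ → ℝ) u ∂lambda01)) :
    ∀ t ∈ Icc (0:ℝ) T,
      (∫ u in S, (φ t : ℝ → ℝ) u ∂lambda01)
        = (∫ u in S, u ∂lambda01)
          + ∫ s in (0:ℝ)..t, (∫ u in S, (k s : ℝ → ℝ) u ∂lambda01) := by
  haveI := isFiniteMeasure_muMeas (β := β) hβ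
  set F : ℝ → ℝ := fun s => ∫ u in S, (φ s : ℝ → ℝ) u ∂lambda01 with hFdef
  set K : ℝ → ℝ := fun s => ∫ u in S, (k s : ℝ → ℝ) u ∂lambda01 with hKdef
  set A : ℝ := ∫ u in S, u ∂lambda01 with hAdef
  have hfin : muInv β S ≠ ⊤ := (muInv_band_lt_top hδ hβ hS hSb).ne
  set g : Lp ℝ 2 (muInv β) := indicatorConstLp 2 hS hfin (1:ℝ) with hgdef
  have hconv : ∀ v : ℝ → ℝ,
      (∫ u, (g : ℝ → ℝ) u * v u ∂lambda01) = ∫ u in S, v u ∂lambda01 :=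
    integral_coe_indicatorLp_mul hS hfin
  have hsm : ∀ (a : ℝ) (v : ℝ → ℝ),
      (∫ u, ((a • g : Lp ℝ 2 (muInv β)) : ℝ → ℝ) u * v u ∂lambda01)
        = a * ∫ u in S, v u ∂lambda01 := by
    intro a v
    have hcoe : ((a • g : Lp ℝ 2 (muInv β)) : ℝ → ℝ) =ᵐ[lambda01] (a • ((g : ℝ → ℝ))) :=
      (Lp.coeFn_smul a g).filter_mono (lambda01_ac_muInv (β := β)).ae_le
    calc (∫ u, ((a • g : Lp ℝ 2 (muInv β)) : ℝ → ℝ) u * v u ∂lambda01)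
        = ∫ u, a * ((g : ℝ → ℝ) u * v u) ∂lambda01 := by
          refine integral_congr_ae (hcoe.mono fun u hu => ?_)
          show ((a • g : Lp ℝ 2 (muInv β)) : ℝ → ℝ) u * v u = a * ((g : ℝ → ℝ) u * v u)
          rw [hu]
          simp [smul_eq_mul, mul_assoc]
      _ = a * ∫ u, (g : ℝ → ℝ) u * v u ∂lambda01 := integral_const_mul a _
      _ = a * ∫ u in S, v u ∂lambda01 := by rw [hconv]
  -- integrability of k
  have hmem2 : MemLp k 2 (volume.restrict (Icc (0:ℝ) T)) := by
    refine ⟨hkmeas, ?_⟩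
    rw [eLpNorm_eq_lintegral_rpow_enorm_toReal (by norm_num) (by norm_num)]
    refine ENNReal.rpow_lt_top_of_nonneg (by norm_num) ?_
    have hpt : ∀ x : ℝ, (‖k x‖ₑ ^ ((2:ℝ≥0∞).toReal)) = ((‖k x‖₊ : ℝ≥0∞) ^ (2:ℕ)) := by
      intro x
      rw [← ENNReal.rpow_natCast]
      norm_num [enorm_eq_nnnorm]
    simp only [hpt]
    exact hkL2.ne
  have hk1 : Integrable k (volume.restrict (Icc (0:ℝ) T)) :=
    memLp_one_iff_integrable.mp (hmem2.mono_exponent (by norm_num))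
  -- K as inner product
  set gl : Lp ℝ 2 lambda01 := indicatorConstLp 2 hS (measure_ne_top lambda01 S) (1:ℝ)
    with hgl
  have hKinner : ∀ f : Lp ℝ 2 lambda01, (inner ℝ gl f : ℝ) = ∫ u in S, (f : ℝ → ℝ) u ∂lambda01 := by
    intro f
    rw [hgl, MeasureTheory.L2.inner_indicatorConstLp_eq_setIntegral_inner ℝ f hS (1:ℝ) _]
    refine setIntegral_congr_ae hS (Filter.Eventually.of_forall fun u _ => ?_)
    simp
  have hKrep : ∀ s, K s = (inner ℝ gl (k s) : ℝ) := fun s => (hKinner (k s)).symm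
  have hKint : IntegrableOn K (Icc (0:ℝ) T) volume := by
    refine ((innerSL ℝ gl).integrable_comp hk1).congr
      (Filter.Eventually.of_forall fun s => ?_)
    rw [hKrep s]
    rfl
  -- F as inner product in L²(μ)
  set w : Lp ℝ 2 (muMeas β) := (memℒp_wfun hβ hδ hS hSb).toLp _ with hw
  have hFrep : ∀ f : Lp ℝ 2 (muMeas β),
      (inner ℝ w f : ℝ) = ∫ u in S, (f : ℝ → ℝ) u ∂lambda01 := by
    intro f
    rw [L2.inner_def]
    calc (∫ u, (inner ℝ ((w : ℝ → ℝ) u) ((f : ℝ → ℝ) u) : ℝ) ∂(muMeas β))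
        = ∫ u, S.indicator (fun u => (kappa β u)⁻¹) u * (f : ℝ → ℝ) u ∂(muMeas β) := by
          refine integral_congr_ae
            (((memℒp_wfun hβ hδ hS hSb).coeFn_toLp).mono fun u hu => ?_)
          show (inner ℝ ((w : ℝ → ℝ) u) ((f : ℝ → ℝ) u) : ℝ)
            = S.indicator (fun u => (kappa β u)⁻¹) u * (f : ℝ → ℝ) u
          rw [show (inner ℝ ((w : ℝ → ℝ) u) ((f : ℝ → ℝ) u) : ℝ)
              = (w : ℝ → ℝ) u * (f : ℝ → ℝ) u from by simp [mul_comm], hu]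
      _ = ∫ u in S, (f : ℝ → ℝ) u ∂lambda01 := integral_band_weight hβ hδ hS hSb _
  have hFcont : ContinuousOn F (Icc (0:ℝ) T) := by
    have hcont : ContinuousOn (fun s => (inner ℝ w (φ s) : ℝ)) (Icc (0:ℝ) T) :=
      (innerSL ℝ w).continuous.comp_continuousOn hφcont
    exact hcont.congr fun s _ => (hFrep (φ s)).symm
  have hF0 : F 0 = A :=
    setIntegral_congr_ae hS
      ((hφ0.filter_mono (lambda01_ac_muMeas (β := β)).ae_le).mono fun u hu _ => hu)
  -- interval/Icc conversion
  have hIccInt : ∀ (f : ℝ → ℝ) {a b : ℝ}, a ≤ b →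
      (∫ s in Icc a b, f s) = ∫ s in a..b, f s := by
    intro f a b hab
    rw [intervalIntegral.integral_of_le hab, integral_Icc_eq_integral_Ioc]
  set c : ℝ → ℝ := fun t => ∫ s in (0:ℝ)..t, K s with hcdef
  set JJ : ℝ → ℝ := fun t => ∫ s in (0:ℝ)..t, s * K s with hJdef
  -- (i) constant test function
  have hzero : ∀ s : ℝ,
      (∫ u, ((0 : Lp ℝ 2 (muInv β)) : ℝ → ℝ) u * (φ s : ℝ → ℝ) u ∂lambda01) = 0 := by
    intro s
    have h0 : ((0 : Lp ℝ 2 (muInv β)) : ℝ → ℝ) =ᵐ[lambda01] 0 :=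
      (Lp.coeFn_zero ℝ 2 (muInv β)).filter_mono (lambda01_ac_muInv (β := β)).ae_le
    rw [integral_congr_ae (g := fun _ => (0:ℝ)) (h0.mono fun u hu => by
      show ((0 : Lp ℝ 2 (muInv β)) : ℝ → ℝ) u * (φ s : ℝ → ℝ) u = 0
      rw [hu]
      simp), integral_zero]
  have hiT : F T = A + c T := by
    have hp1 := hpairing (fun _ => g) (fun _ => 0) (memH_const hT g)
    simp only [hconv, hzero, integral_zero, sub_zero] at hp1
    rw [hIccInt K hT.le] at hp1
    have hp1' : F T - A = c T := hp1
    linarith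
  -- (ii) ramp test function, and main integrated identity
  have hMain : ∀ t ∈ Icc (0:ℝ) T,
      (∫ s in (0:ℝ)..t, F s) = t * A + (t * c t - JJ t) := by
    intro t ht
    have hp2 := hpairing _ _ (memH_ramp hT g ht)
    simp only [hsm] at hp2
    rw [min_eq_right ht.2, min_eq_left ht.1, zero_mul] at hp2
    have hp2' : t * F T - 0 - (∫ s in Icc (0:ℝ) T,
        Set.indicator {x : ℝ | x ≤ t} (fun _ => (1:ℝ)) s * F s)
        = ∫ s in Icc (0:ℝ) T, min s t * K s := hp2
    -- third term
    have h3 : (∫ s in Icc (0:ℝ) T,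
        Set.indicator {x : ℝ | x ≤ t} (fun _ => (1:ℝ)) s * F s)
        = ∫ s in (0:ℝ)..t, F s := by
      have hptw : ∀ s : ℝ, Set.indicator {x : ℝ | x ≤ t} (fun _ => (1:ℝ)) s * F s
          = Set.indicator (Iic t) F s := by
        intro s
        by_cases h : s ≤ t <;> simp [Set.indicator_apply, h, mem_Iic]
      simp only [hptw]
      rw [setIntegral_indicator measurableSet_Iic]
      have hset : Icc (0:ℝ) T ∩ Iic t = Icc 0 t := by
        ext s
        simp only [mem_inter_iff, mem_Icc, mem_Iic]
        constructor
        · rintro ⟨⟨h1, _⟩, h3⟩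
          exact ⟨h1, h3⟩
        · rintro ⟨h1, h3⟩
          exact ⟨⟨h1, h3.trans ht.2⟩, h3⟩
      rw [hset, hIccInt F ht.1]
    rw [h3] at hp2'
    -- right-hand side manipulation
    have hKt : IntervalIntegrable K volume 0 t := by
      have hmono : IntegrableOn K (Icc (0:ℝ) t) volume :=
        hKint.mono_set (Icc_subset_Icc_right ht.2)
      exact (by rwa [uIcc_of_le ht.1] : IntegrableOn K (uIcc (0:ℝ) t) volume).intervalIntegrable
    have hKT : IntervalIntegrable K volume 0 T :=
      (by rwa [uIcc_of_le hT.le] : IntegrableOn K (uIcc (0:ℝ) T) volume).intervalIntegrable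
    have hminK : IntegrableOn (fun s => min s t * K s) (Icc (0:ℝ) T) volume := by
      refine hKint.bdd_mul (c := T) ((continuous_id.min continuous_const).aestronglyMeasurable)
        ((ae_restrict_mem measurableSet_Icc).mono fun s hs => ?_)
      show ‖min s t‖ ≤ T
      rw [Real.norm_eq_abs, abs_of_nonneg (le_min hs.1 ht.1)]
      exact (min_le_right s t).trans ht.2
    have htK : IntegrableOn (fun s => t * K s) (Icc (0:ℝ) T) volume := hKint.const_mul t
    have h5 : (∫ s in Icc (0:ℝ) T, (t * K s - min s t * K s))
        = t * c T - (∫ s in Icc (0:ℝ) T, min s t * K s) := by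
      rw [integral_sub htK hminK, integral_const_mul, hIccInt K hT.le]
    have h6 : (∫ s in Icc (0:ℝ) T, (t * K s - min s t * K s)) = t * c t - JJ t := by
      have hptw : ∀ s : ℝ, t * K s - min s t * K s
          = Set.indicator (Iic t) (fun s => (t - s) * K s) s := by
        intro s
        by_cases h : s ≤ t
        · rw [Set.indicator_of_mem (mem_Iic.2 h), min_eq_left h]
          ring
        · rw [Set.indicator_of_notMem (fun hc => h (mem_Iic.1 hc)),
            min_eq_right (le_of_not_ge h)]
          ring
      simp only [hptw]
      rw [setIntegral_indicator measurableSet_Iic]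
      have hset : Icc (0:ℝ) T ∩ Iic t = Icc 0 t := by
        ext s
        simp only [mem_inter_iff, mem_Icc, mem_Iic]
        constructor
        · rintro ⟨⟨h1, _⟩, h3⟩
          exact ⟨h1, h3⟩
        · rintro ⟨h1, h3⟩
          exact ⟨⟨h1, h3.trans ht.2⟩, h3⟩
      rw [hset, hIccInt _ ht.1]
      have hsKt : IntervalIntegrable (fun s => s * K s) volume 0 t :=
        hKt.continuousOn_mul continuousOn_id
      have hrw : (∫ s in (0:ℝ)..t, (t - s) * K s)
          = ∫ s in (0:ℝ)..t, (t * K s - s * K s) := by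
        congr 1
        ext s
        ring
      rw [hrw, intervalIntegral.integral_sub (hKt.const_mul t) hsKt,
        intervalIntegral.integral_const_mul]
    have hiT' : t * F T = t * A + t * c T := by
      rw [hiT]
      ring
    linarith [hp2', hiT', h5, h6]
  -- auxiliary integrabilities
  have hsK_all : IntegrableOn (fun s => s * K s) (Icc (0:ℝ) T) volume := by
    refine hKint.bdd_mul (c := T) (aestronglyMeasurable_id)
      ((ae_restrict_mem measurableSet_Icc).mono fun s hs => ?_)
    show ‖s‖ ≤ T
    rw [Real.norm_eq_abs, abs_of_nonneg hs.1]
    exact hs.2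
  have huIcc : ∀ {a b : ℝ}, a ∈ Icc (0:ℝ) T → b ∈ Icc (0:ℝ) T → uIcc a b ⊆ Icc (0:ℝ) T := by
    intro a b ha hb
    rw [uIcc]
    exact Icc_subset_Icc (le_inf ha.1 hb.1) (sup_le ha.2 hb.2)
  have hKIcc : ∀ {a b : ℝ}, a ∈ Icc (0:ℝ) T → b ∈ Icc (0:ℝ) T →
      IntervalIntegrable K volume a b := fun ha hb =>
    (hKint.mono_set (huIcc ha hb)).intervalIntegrable
  have hsKIcc : ∀ {a b : ℝ}, a ∈ Icc (0:ℝ) T → b ∈ Icc (0:ℝ) T →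
      IntervalIntegrable (fun s => s * K s) volume a b := fun ha hb =>
    (hsK_all.mono_set (huIcc ha hb)).intervalIntegrable
  have h0T : (0:ℝ) ∈ Icc (0:ℝ) T := ⟨le_refl 0, hT.le⟩
  have hTT : T ∈ Icc (0:ℝ) T := ⟨hT.le, le_refl T⟩
  -- derivative argument on the interior
  have hFmid : ∀ t ∈ Ioo (0:ℝ) T, F t = A + c t := by
    intro t ht
    have htm : t ∈ Icc (0:ℝ) T := ⟨ht.1.le, ht.2.le⟩
    have hnb : Icc (0:ℝ) T ∈ nhds t := Icc_mem_nhds ht.1 ht.2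
    have hFint : IntegrableOn F (Icc (0:ℝ) T) volume := hFcont.integrableOn_Icc
    -- derivative of the left-hand side
    have hL : HasDerivAt (fun y => ∫ s in (0:ℝ)..y, F s) (F t) t := by
      refine intervalIntegral.integral_hasDerivAt_right
        ((hFint.mono_set (huIcc h0T htm)).intervalIntegrable)
        ⟨Icc (0:ℝ) T, hnb, hFcont.aestronglyMeasurable measurableSet_Icc⟩
        (hFcont.continuousAt hnb)
    -- key algebraic identity
    have hkey : ∀ y ∈ Icc (0:ℝ) T,
        (y * c y - JJ y) - (t * c t - JJ t) - (y - t) * c t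
          = ∫ s in t..y, (y - s) * K s := by
      intro y hy
      have h1 : c y - c t = ∫ s in t..y, K s :=
        intervalIntegral.integral_interval_sub_left (hKIcc h0T hy) (hKIcc h0T htm)
      have h2 : JJ y - JJ t = ∫ s in t..y, s * K s :=
        intervalIntegral.integral_interval_sub_left (hsKIcc h0T hy) (hsKIcc h0T htm)
      have h3 : (∫ s in t..y, (y - s) * K s)
          = y * (∫ s in t..y, K s) - ∫ s in t..y, s * K s := by
        have hrw : (∫ s in t..y, (y - s) * K s)
            = ∫ s in t..y, (y * K s - s * K s) := by
          congr 1
          ext s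
          ring
        rw [hrw, intervalIntegral.integral_sub ((hKIcc htm hy).const_mul y)
          (hsKIcc htm hy), intervalIntegral.integral_const_mul]
      rw [h3, ← h1, ← h2]
      ring
    -- continuity of the primitive of ‖K‖
    set N : ℝ → ℝ := fun x => ∫ s in Ioc (0:ℝ) x, ‖K s‖ ∂volume with hNdef
    have hNc : ContinuousOn N (Icc (0:ℝ) T) :=
      intervalIntegral.continuousOn_primitive hKint.norm
    have hNt : ContinuousAt N t := hNc.continuousAt hnb
    have htend : Filter.Tendsto (fun y => |N y - N t|) (nhds t) (nhds 0) := by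
      have h1 : ContinuousAt (fun y => |N y - N t|) t := (hNt.sub continuousAt_const).abs
      have h2 := h1.tendsto
      simpa using h2
    -- derivative of the principal part of the right-hand side
    have hR : HasDerivAt (fun y => y * c y - JJ y) (c t) t := by
      rw [hasDerivAt_iff_isLittleO]
      rw [Asymptotics.isLittleO_iff]
      intro ε hε
      filter_upwards [hnb, htend.eventually_lt_const hε] with y hy hylt
      have hKty : IntervalIntegrable K volume t y := hKIcc htm hy
      have hNsub : |∫ s in t..y, ‖K s‖| = |N y - N t| := by
        have hNy : N y = ∫ s in (0:ℝ)..y, ‖K s‖ := by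
          rw [intervalIntegral.integral_of_le hy.1]
        have hNt' : N t = ∫ s in (0:ℝ)..t, ‖K s‖ := by
          rw [intervalIntegral.integral_of_le htm.1]
        rw [hNy, hNt', intervalIntegral.integral_interval_sub_left
          (hKIcc h0T hy).norm (hKIcc h0T htm).norm]
      have hb : ∀ᵐ s ∂volume.restrict (Set.uIoc t y), ‖(y - s) * K s‖ ≤ |y - t| * ‖K s‖ := by
        refine (ae_restrict_mem measurableSet_uIoc).mono fun s hs => ?_
        rw [norm_mul, Real.norm_eq_abs]
        refine mul_le_mul_of_nonneg_right ?_ (norm_nonneg _)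
        refine abs_le.2 ⟨?_, ?_⟩
        · rcases Set.mem_uIoc.1 hs with ⟨h1, h2⟩ | ⟨h1, h2⟩ <;>
            linarith [neg_abs_le (y - t), le_abs_self (y - t)]
        · rcases Set.mem_uIoc.1 hs with ⟨h1, h2⟩ | ⟨h1, h2⟩ <;>
            linarith [neg_abs_le (y - t), le_abs_self (y - t)]
      have hg : IntervalIntegrable (fun s => |y - t| * ‖K s‖) volume t y :=
        hKty.norm.const_mul _
      have hbound := intervalIntegral.norm_integral_le_abs_of_norm_le hb hg
      rw [intervalIntegral.integral_const_mul, abs_mul, abs_abs] at hbound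
      calc ‖(fun y => y * c y - JJ y) y - (fun y => y * c y - JJ y) t - (y - t) • c t‖
          = ‖∫ s in t..y, (y - s) * K s‖ := by
            rw [smul_eq_mul]
            show ‖(y * c y - JJ y) - (t * c t - JJ t) - (y - t) * c t‖ = _
            rw [hkey y hy]
        _ ≤ |y - t| * |∫ s in t..y, ‖K s‖| := hbound
        _ = |y - t| * |N y - N t| := by rw [hNsub]
        _ ≤ |y - t| * ε := mul_le_mul_of_nonneg_left hylt.le (abs_nonneg _)
        _ = ε * ‖y - t‖ := by rw [Real.norm_eq_abs]; ring
    have hRA : HasDerivAt (fun y => y * A + (y * c y - JJ y)) (A + c t) t :=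
      (hasDerivAt_mul_const A).add hR
    have hEq : (fun y => ∫ s in (0:ℝ)..y, F s)
        =ᶠ[nhds t] fun y => y * A + (y * c y - JJ y) :=
      Filter.eventually_of_mem hnb fun y hy => hMain y hy
    exact hL.unique (hRA.congr_of_eventuallyEq hEq)
  -- conclusion
  intro t ht
  rcases eq_or_lt_of_le ht.1 with h0 | h0
  · rw [← h0]
    show F 0 = A + c 0
    rw [hF0]
    have : c 0 = 0 := intervalIntegral.integral_same
    rw [this, add_zero]
  · rcases eq_or_lt_of_le ht.2 with hT' | hT'
    · rw [hT']
      exact hiT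
    · exact hFmid t ⟨h0, hT'⟩
end key


/-- Let `φ ∈ C([0,T], L²(μ))` with `φ(0) = id` and `k ∈ L²([0,T], L²(λ))`.
If for every `h ∈ H` one has
`⟨h(T), φ(T)⟩ − ⟨h(0), id⟩ − ∫₀ᵀ ⟨ḣ(s), φ(s)⟩ ds = ∫₀ᵀ ⟨h(s), k(s)⟩ ds`
(pairings in `L²(λ)`), then `φ` takes values in `L²(λ)` and
`φ(t) = id + ∫₀ᵗ k(s) ds` in `L²(λ)` for every `t ∈ [0,T]`; in particular `φ` is continuous and
absolutely continuous as an `L²(λ)`-valued function with derivative `k`. -/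
theorem integration_by_parts_characterization
    (T : ℝ) (hT : 0 < T) (β : ℝ) (hβ : 1 < β)
    (φ : ℝ → Lp ℝ 2 (muMeas β)) (hφcont : ContinuousOn φ (Set.Icc 0 T))
    (hφ0 : (φ 0 : ℝ → ℝ) =ᵐ[muMeas β] fun u => u)
    (k : ℝ → Lp ℝ 2 lambda01)
    (hkmeas : AEStronglyMeasurable k (volume.restrict (Set.Icc (0:ℝ) T)))
    (hkL2 : (∫⁻ s in Set.Icc (0:ℝ) T, ((‖k s‖₊ : ℝ≥0∞) ^ 2)) < ⊤)
    (hpairing : ∀ h hdot : ℝ → Lp ℝ 2 (muInv β), MemH T β h hdot →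
      (∫ u, (h T : ℝ → ℝ) u * (φ T : ℝ → ℝ) u ∂lambda01)
        - (∫ u, (h 0 : ℝ → ℝ) u * u ∂lambda01)
        - (∫ s in Set.Icc (0:ℝ) T,
            (∫ u, (hdot s : ℝ → ℝ) u * (φ s : ℝ → ℝ) u ∂lambda01))
      = ∫ s in Set.Icc (0:ℝ) T,
          (∫ u, (h s : ℝ → ℝ) u * (k s : ℝ → ℝ) u ∂lambda01)) :
    ∀ t ∈ Set.Icc (0:ℝ) T,
      MemLp (φ t : ℝ → ℝ) 2 lambda01 ∧
      (φ t : ℝ → ℝ) =ᵐ[lambda01]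
        fun u => u + ((((∫ s in (0:ℝ)..t, k s) : Lp ℝ 2 lambda01) : ℝ → ℝ) u) := by
  have hβ0 : (0:ℝ) ≤ β := (zero_lt_one.trans hβ).le
  haveI := isFiniteMeasure_muMeas (β := β) hβ0
  intro t ht
  set Φ : Lp ℝ 2 lambda01 := ∫ s in (0:ℝ)..t, k s with hΦdef
  set ψ : ℝ → ℝ := fun u => u + (Φ : ℝ → ℝ) u with hψdef
  -- integrability of k
  have hmem2 : MemLp k 2 (volume.restrict (Icc (0:ℝ) T)) := by
    refine ⟨hkmeas, ?_⟩
    rw [eLpNorm_eq_lintegral_rpow_enorm_toReal (by norm_num) (by norm_num)]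
    refine ENNReal.rpow_lt_top_of_nonneg (by norm_num) ?_
    have hpt : ∀ x : ℝ, (‖k x‖ₑ ^ ((2:ℝ≥0∞).toReal)) = ((‖k x‖₊ : ℝ≥0∞) ^ (2:ℕ)) := by
      intro x
      rw [← ENNReal.rpow_natCast]
      norm_num [enorm_eq_nnnorm]
    simp only [hpt]
    exact hkL2.ne
  have hk1 : Integrable k (volume.restrict (Icc (0:ℝ) T)) :=
    memLp_one_iff_integrable.mp (hmem2.mono_exponent (by norm_num))
  have hkT' : IntegrableOn k (Icc (0:ℝ) T) volume := hk1
  have hkt : IntervalIntegrable k volume 0 t := by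
    have h2 : IntegrableOn k (Icc (0:ℝ) t) volume := hkT'.mono_set (Icc_subset_Icc_right ht.2)
    exact (by rwa [uIcc_of_le ht.1] : IntegrableOn k (uIcc (0:ℝ) t) volume).intervalIntegrable
  -- inner products against indicators over lambda01
  have hSint : ∀ (S : Set ℝ) (hS : MeasurableSet S) (f : Lp ℝ 2 lambda01),
      (inner ℝ (indicatorConstLp 2 hS (measure_ne_top lambda01 S) (1:ℝ)) f : ℝ)
        = ∫ u in S, (f : ℝ → ℝ) u ∂lambda01 := by
    intro S hS f
    rw [MeasureTheory.L2.inner_indicatorConstLp_eq_setIntegral_inner ℝ f hS (1:ℝ) _]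
    refine setIntegral_congr_ae hS (Filter.Eventually.of_forall fun u _ => ?_)
    simp
  -- time integral commutes with the pairing
  have hcomm : ∀ (S : Set ℝ), MeasurableSet S →
      (∫ s in (0:ℝ)..t, (∫ u in S, (k s : ℝ → ℝ) u ∂lambda01))
        = ∫ u in S, (Φ : ℝ → ℝ) u ∂lambda01 := by
    intro S hS
    set gl : Lp ℝ 2 lambda01 := indicatorConstLp 2 hS (measure_ne_top lambda01 S) (1:ℝ)
    calc (∫ s in (0:ℝ)..t, (∫ u in S, (k s : ℝ → ℝ) u ∂lambda01))
        = ∫ s in (0:ℝ)..t, (innerSL ℝ gl) (k s) := by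
          refine intervalIntegral.integral_congr fun s _ => ?_
          rw [innerSL_apply_apply]
          exact (hSint S hS (k s)).symm
      _ = (innerSL ℝ gl) (∫ s in (0:ℝ)..t, k s) :=
          ContinuousLinearMap.intervalIntegral_comp_comm _ hkt
      _ = ∫ u in S, (Φ : ℝ → ℝ) u ∂lambda01 := by
          rw [innerSL_apply_apply, ← hΦdef]
          exact hSint S hS Φ
  -- basic integrabilities over lambda01
  have hid_int : Integrable (fun u => u) lambda01 :=
    (continuous_id.integrableOn_Icc : IntegrableOn id (Icc (0:ℝ) 1) volume)
  have hΦ_int : Integrable (Φ : ℝ → ℝ) lambda01 :=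
    memLp_one_iff_integrable.mp ((Lp.memLp Φ).mono_exponent (by norm_num))
  have hψ_int : Integrable ψ lambda01 := hid_int.add hΦ_int
  have hφt_ae : AEStronglyMeasurable ((φ t : ℝ → ℝ)) lambda01 :=
    AEStronglyMeasurable.mono_ac (lambda01_ac_muMeas (β := β)) (Lp.aestronglyMeasurable (φ t))
  have hφμ1 : Integrable ((φ t : ℝ → ℝ)) (muMeas β) :=
    memLp_one_iff_integrable.mp ((Lp.memLp (φ t)).mono_exponent (by norm_num))
  -- set-integral identity on every measurable subset of a band
  have hband : ∀ (δ : ℝ), 0 < δ → ∀ (S : Set ℝ), MeasurableSet S → S ⊆ Icc δ (1-δ) →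
      (∫ u in S, (φ t : ℝ → ℝ) u ∂lambda01) = ∫ u in S, ψ u ∂lambda01 := by
    intro δ hδ S hS hSb
    have hkey := key_identity hT hβ0 hδ hS hSb φ hφcont hφ0 k hkmeas hkL2 hpairing t ht
    rw [hcomm S hS] at hkey
    rw [hkey, hψdef]
    rw [integral_add hid_int.integrableOn hΦ_int.integrableOn]
  -- integrability of φ t on a band
  have hφt_band : ∀ (δ : ℝ), 0 < δ →
      IntegrableOn ((φ t : ℝ → ℝ)) (Icc δ (1-δ)) lambda01 := by
    intro δ hδ
    refine ⟨hφt_ae.restrict, ?_⟩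
    rw [hasFiniteIntegral_def]
    set C : ℝ≥0∞ := ENNReal.ofReal ((δ ^ β)⁻¹) with hC
    calc (∫⁻ u in Icc δ (1-δ), ‖(φ t : ℝ → ℝ) u‖₊ ∂lambda01)
        ≤ ∫⁻ u in Icc δ (1-δ),
            C * (ENNReal.ofReal (kappa β u) * ‖(φ t : ℝ → ℝ) u‖₊) ∂lambda01 := by
          refine setLIntegral_mono' measurableSet_Icc fun u hu => ?_
          have h1 : (1:ℝ≥0∞) ≤ C * ENNReal.ofReal (kappa β u) := by
            rw [hC, ← ENNReal.ofReal_mul (by positivity), ← ENNReal.ofReal_one]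
            refine ENNReal.ofReal_le_ofReal ?_
            have hp : (0:ℝ) < δ ^ β := Real.rpow_pos_of_pos hδ β
            calc (1:ℝ) = (δ ^ β)⁻¹ * δ ^ β := (inv_mul_cancel₀ hp.ne').symm
              _ ≤ (δ ^ β)⁻¹ * kappa β u :=
                  mul_le_mul_of_nonneg_left (kappa_band_lb hδ hβ0 hu) (inv_nonneg.2 hp.le)
          calc ((‖(φ t : ℝ → ℝ) u‖₊ : ℝ≥0∞))
              = 1 * (‖(φ t : ℝ → ℝ) u‖₊ : ℝ≥0∞) := (one_mul _).symm
            _ ≤ (C * ENNReal.ofReal (kappa β u)) * (‖(φ t : ℝ → ℝ) u‖₊ : ℝ≥0∞) :=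
                mul_le_mul_left h1 _
            _ = C * (ENNReal.ofReal (kappa β u) * (‖(φ t : ℝ → ℝ) u‖₊ : ℝ≥0∞)) :=
                mul_assoc _ _ _
      _ = C * ∫⁻ u in Icc δ (1-δ),
            ENNReal.ofReal (kappa β u) * ‖(φ t : ℝ → ℝ) u‖₊ ∂lambda01 :=
          lintegral_const_mul' C _ ENNReal.ofReal_ne_top
      _ = C * ∫⁻ u in Icc δ (1-δ), ‖(φ t : ℝ → ℝ) u‖₊ ∂(muMeas β) := by
          rw [lintegral_muMeas_restrict measurableSet_Icc]
      _ ≤ C * ∫⁻ u, ‖(φ t : ℝ → ℝ) u‖₊ ∂(muMeas β) := by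
          refine mul_le_mul_right (setLIntegral_le_lintegral _ _) C
      _ < ⊤ := ENNReal.mul_lt_top ENNReal.ofReal_lt_top hφμ1.2
  -- a.e. equality on each band
  have hband_ae : ∀ (δ : ℝ), 0 < δ →
      (φ t : ℝ → ℝ) =ᵐ[lambda01.restrict (Icc δ (1-δ))] ψ := by
    intro δ hδ
    haveI : IsFiniteMeasure (lambda01.restrict (Icc δ (1-δ))) := by
      constructor
      rw [Measure.restrict_apply_univ]
      exact (measure_lt_top lambda01 _)
    refine ae_eq_of_forall_setIntegral_eq_of_sigmaFinite
      (fun s hs _ => (hφt_band δ hδ).integrableOn)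
      (fun s hs _ => (hψ_int.restrict (s := Icc δ (1-δ))).integrableOn)
      (fun s hs _ => ?_)
    rw [Measure.restrict_restrict hs]
    exact hband δ hδ _ (hs.inter measurableSet_Icc) inter_subset_right
  -- combine the bands
  have hae : (φ t : ℝ → ℝ) =ᵐ[lambda01] ψ := by
    set E : Set ℝ := {u | ¬ (φ t : ℝ → ℝ) u = ψ u} with hE
    have hEn : ∀ n : ℕ,
        lambda01 (E ∩ Icc (((n:ℝ)+2))⁻¹ (1 - (((n:ℝ)+2))⁻¹)) = 0 := by
      intro n
      have hδ : (0:ℝ) < (((n:ℝ)+2))⁻¹ := by positivity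
      have h1 := hband_ae _ hδ
      have h2 : (lambda01.restrict (Icc (((n:ℝ)+2))⁻¹ (1 - (((n:ℝ)+2))⁻¹))) E = 0 :=
        ae_iff.mp h1
      rwa [Measure.restrict_apply' measurableSet_Icc] at h2
    have hsub : E ⊆ (⋃ n : ℕ, E ∩ Icc (((n:ℝ)+2))⁻¹ (1 - (((n:ℝ)+2))⁻¹))
        ∪ {u : ℝ | ¬ u ∈ Ioo (0:ℝ) 1} := by
      intro u hu
      by_cases hio : u ∈ Ioo (0:ℝ) 1
      · left
        have hmin : (0:ℝ) < min u (1 - u) := lt_min hio.1 (by linarith [hio.2])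
        obtain ⟨n, hn⟩ := exists_nat_one_div_lt hmin
        have hle : (((n:ℝ)+2))⁻¹ ≤ min u (1 - u) := by
          refine le_trans (le_of_lt ?_) hn.le
          rw [one_div]
          exact inv_strictAnti₀ (by positivity) (by linarith)
        refine mem_iUnion.2 ⟨n, hu, ?_, ?_⟩
        · exact le_trans hle (min_le_left _ _)
        · have := le_trans hle (min_le_right _ _)
          linarith
      · right
        exact hio
    refine ae_iff.2 (measure_mono_null hsub ?_)
    refine measure_union_null (measure_iUnion_null hEn) (ae_iff.mp ae_mem_Ioo)
  have hid_mem : MemLp (fun u => u) 2 lambda01 := by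
    refine MemLp.of_bound aestronglyMeasurable_id 1 (ae_mem_Icc.mono fun u hu => ?_)
    rw [Real.norm_eq_abs, abs_of_nonneg hu.1]
    exact hu.2
  have hψ_mem : MemLp ψ 2 lambda01 := hid_mem.add (Lp.memLp Φ)
  exact ⟨MemLp.ae_eq hae.symm hψ_mem, hae⟩

end
end
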